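/- arXiv:2303.16422 — 9 statements merged into one kernel-verified Lean document; each statement's English description precedes it below -/
import Mathlib

section
/- Let (Ω, ℙ) be a probability space and p, p_S : Ω → ℝ independent random variables with p distributed as the real Gaussian measure with common mean μ and variance σ_p² and p_S distributed as the real Gaussian measure with the same mean μ and variance σ_S², where σ_p, σ_S > 0. Fix β ∈ (0,1], set p̄ = β·p_S + (1−β)·p, Δ = (1−β)²σ_p² + β²σ_S², and p̂ = μ + ((1−β)σ_p²/Δ)·(p̄ − μ). Then the election bias at time zero vanishes, 𝔼[(p̂ − p̄)²] = 0, if and only if (1−β)σ_p² = β·σ_S², i.e. (1−β)/β = σ_S²/σ_p². -/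
open MeasureTheory ProbabilityTheory
open Real

-- base integrals
lemma aux_int_odd {b : ℝ} (hb : 0 < b) : ∫ x : ℝ, x * rexp (-b * x ^ 2) = 0 := by
  have h := MeasureTheory.integral_neg_eq_self (fun x : ℝ => x * rexp (-b * x ^ 2)) volume
  simp only [neg_sq, neg_mul, integral_neg] at h
  have h2 : ∫ x : ℝ, x * rexp (-b * x ^ 2) = ∫ x : ℝ, x * rexp (-(b * x ^ 2)) := by
    simp [neg_mul]
  rw [h2]; linarith

lemma aux_integrable_sq_exp {b : ℝ} (hb : 0 < b) :
    Integrable (fun x : ℝ => x ^ 2 * rexp (-b * x ^ 2)) := by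
  have := integrable_rpow_mul_exp_neg_mul_sq hb (s := 2) (by norm_num)
  simpa [Real.rpow_two] using this

lemma aux_int_sq_exp {b : ℝ} (hb : 0 < b) :
    ∫ x : ℝ, x ^ 2 * rexp (-b * x ^ 2) = b ^ (-(3:ℝ)/2) * Real.sqrt π / 2 := by
  have hIoi : ∫ x in Set.Ioi (0:ℝ), x ^ 2 * rexp (-b * x ^ 2)
      = b ^ (-(3:ℝ)/2) * (1/2) * Real.Gamma (3/2) := by
    have h := integral_rpow_mul_exp_neg_mul_rpow (p := 2) (q := 2) (b := b)
      (by norm_num) (by norm_num) hb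
    norm_num at h
    rw [neg_div, ← h]
    simp [neg_mul]
  have heven : (fun x : ℝ => x ^ 2 * rexp (-b * x ^ 2)) = fun x => |x| ^ 2 * rexp (-b * |x| ^ 2) := by
    ext x; rw [sq_abs]
  have hGamma : Real.Gamma (3/2) = Real.sqrt π / 2 := by
    have : (3:ℝ)/2 = 1/2 + 1 := by norm_num
    rw [this, Real.Gamma_add_one (by norm_num), Real.Gamma_one_half_eq]
    ring
  calc ∫ x : ℝ, x ^ 2 * rexp (-b * x ^ 2)
      = ∫ x : ℝ, |x| ^ 2 * rexp (-b * |x| ^ 2) := by rw [← heven]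
    _ = 2 * ∫ x in Set.Ioi (0:ℝ), x ^ 2 * rexp (-b * x ^ 2) :=
        integral_comp_abs (f := fun x => x ^ 2 * rexp (-b * x ^ 2))
    _ = b ^ (-(3:ℝ)/2) * Real.sqrt π / 2 := by rw [hIoi, hGamma]; ring

lemma aux_var_ne_zero {σ : ℝ} (hσ : 0 < σ) : (⟨σ ^ 2, sq_nonneg σ⟩ : NNReal) ≠ 0 := by
  intro h
  have := congrArg NNReal.toReal h
  change σ ^ 2 = 0 at this
  exact (pow_pos hσ 2).ne' this

lemma aux_pdf_eq (μ σ : ℝ) (x : ℝ) :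
    gaussianPDFReal μ ⟨σ ^ 2, sq_nonneg σ⟩ x
      = (Real.sqrt (2 * π * σ ^ 2))⁻¹ * rexp (-(2 * σ ^ 2)⁻¹ * (x - μ) ^ 2) := by
  unfold gaussianPDFReal
  change (√(2 * π * σ ^ 2))⁻¹ * rexp (-(x - μ) ^ 2 / (2 * σ ^ 2)) = _
  congr 1
  ring

lemma aux_map_integral (μ σ : ℝ) (hσ : 0 < σ) (g : ℝ → ℝ) :
    ∫ x, g x ∂(gaussianReal μ ⟨σ ^ 2, sq_nonneg σ⟩)
      = ∫ x, gaussianPDFReal μ ⟨σ ^ 2, sq_nonneg σ⟩ x * g x := by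
  rw [gaussianReal_of_var_ne_zero _ (aux_var_ne_zero hσ)]
  have hd : gaussianPDF μ ⟨σ ^ 2, sq_nonneg σ⟩
      = fun x => ((Real.toNNReal (gaussianPDFReal μ ⟨σ ^ 2, sq_nonneg σ⟩ x) : NNReal) : ENNReal) :=
    rfl
  rw [hd]
  erw [integral_withDensity_eq_integral_smul
    ((measurable_gaussianPDFReal _ _).real_toNNReal) g]
  refine integral_congr_ae (Filter.Eventually.of_forall fun x => ?_)
  show (gaussianPDFReal μ ⟨σ ^ 2, sq_nonneg σ⟩ x).toNNReal • g x
      = gaussianPDFReal μ ⟨σ ^ 2, sq_nonneg σ⟩ x * g x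
  erw [NNReal.smul_def, smul_eq_mul, Real.coe_toNNReal _ (gaussianPDFReal_nonneg _ _ _)]

lemma aux_integrable_of (μ σ : ℝ) (hσ : 0 < σ) {g : ℝ → ℝ}
    (hg : Integrable (fun x => g x * gaussianPDFReal μ ⟨σ ^ 2, sq_nonneg σ⟩ x)) :
    Integrable g (gaussianReal μ ⟨σ ^ 2, sq_nonneg σ⟩) := by
  rw [gaussianReal_of_var_ne_zero _ (aux_var_ne_zero hσ)]
  refine (integrable_withDensity_iff (measurable_gaussianPDF _ _)
    (Filter.Eventually.of_forall fun x => ENNReal.ofReal_lt_top)).mpr ?_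
  refine hg.congr (Filter.Eventually.of_forall fun x => ?_)
  show g x * gaussianPDFReal μ ⟨σ ^ 2, sq_nonneg σ⟩ x
      = g x * (ENNReal.ofReal (gaussianPDFReal μ ⟨σ ^ 2, sq_nonneg σ⟩ x)).toReal
  erw [ENNReal.toReal_ofReal (gaussianPDFReal_nonneg _ _ _)]

lemma aux_integrable_sq (μ σ : ℝ) (hσ : 0 < σ) :
    Integrable (fun x => (x - μ) ^ 2) (gaussianReal μ ⟨σ ^ 2, sq_nonneg σ⟩) := by
  refine aux_integrable_of μ σ hσ ?_
  have hb : 0 < (2 * σ ^ 2)⁻¹ := by positivity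
  have h := ((aux_integrable_sq_exp hb).const_mul (Real.sqrt (2 * π * σ ^ 2))⁻¹).comp_sub_right μ
  refine h.congr (Filter.Eventually.of_forall fun x => ?_)
  simp only [aux_pdf_eq]
  ring

lemma aux_integrable_id (μ σ : ℝ) (hσ : 0 < σ) :
    Integrable (fun x => x - μ) (gaussianReal μ ⟨σ ^ 2, sq_nonneg σ⟩) := by
  refine aux_integrable_of μ σ hσ ?_
  have hb : 0 < (2 * σ ^ 2)⁻¹ := by positivity
  have h := ((integrable_mul_exp_neg_mul_sq hb).const_mul
    (Real.sqrt (2 * π * σ ^ 2))⁻¹).comp_sub_right μ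
  refine h.congr (Filter.Eventually.of_forall fun x => ?_)
  simp only [aux_pdf_eq]
  ring

lemma aux_moment1 (μ σ : ℝ) (hσ : 0 < σ) :
    ∫ x, (x - μ) ∂(gaussianReal μ ⟨σ ^ 2, sq_nonneg σ⟩) = 0 := by
  rw [aux_map_integral μ σ hσ]
  have hb : 0 < (2 * σ ^ 2)⁻¹ := by positivity
  calc ∫ x, gaussianPDFReal μ ⟨σ ^ 2, sq_nonneg σ⟩ x * (x - μ)
      = ∫ x, (Real.sqrt (2 * π * σ ^ 2))⁻¹ *
          ((x - μ) * rexp (-(2 * σ ^ 2)⁻¹ * (x - μ) ^ 2)) := by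
        refine integral_congr_ae (Filter.Eventually.of_forall fun x => ?_)
        simp only [aux_pdf_eq]; ring
    _ = (Real.sqrt (2 * π * σ ^ 2))⁻¹ *
          ∫ x, (fun y => y * rexp (-(2 * σ ^ 2)⁻¹ * y ^ 2)) (x - μ) := by
        rw [integral_const_mul]
    _ = 0 := by
        rw [integral_sub_right_eq_self (fun y => y * rexp (-(2 * σ ^ 2)⁻¹ * y ^ 2)) μ,
          aux_int_odd hb, mul_zero]

lemma aux_moment2 (μ σ : ℝ) (hσ : 0 < σ) :
    ∫ x, (x - μ) ^ 2 ∂(gaussianReal μ ⟨σ ^ 2, sq_nonneg σ⟩) = σ ^ 2 := by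
  rw [aux_map_integral μ σ hσ]
  have hb : 0 < (2 * σ ^ 2)⁻¹ := by positivity
  have key : ∫ x, gaussianPDFReal μ ⟨σ ^ 2, sq_nonneg σ⟩ x * (x - μ) ^ 2
      = (Real.sqrt (2 * π * σ ^ 2))⁻¹ * (((2 * σ ^ 2)⁻¹) ^ (-(3:ℝ)/2) * Real.sqrt π / 2) := by
    calc ∫ x, gaussianPDFReal μ ⟨σ ^ 2, sq_nonneg σ⟩ x * (x - μ) ^ 2
        = ∫ x, (Real.sqrt (2 * π * σ ^ 2))⁻¹ *
            ((x - μ) ^ 2 * rexp (-(2 * σ ^ 2)⁻¹ * (x - μ) ^ 2)) := by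
          refine integral_congr_ae (Filter.Eventually.of_forall fun x => ?_)
          simp only [aux_pdf_eq]; ring
      _ = (Real.sqrt (2 * π * σ ^ 2))⁻¹ *
            ∫ x, (fun y => y ^ 2 * rexp (-(2 * σ ^ 2)⁻¹ * y ^ 2)) (x - μ) := by
          rw [integral_const_mul]
      _ = _ := by
          rw [integral_sub_right_eq_self (fun y => y ^ 2 * rexp (-(2 * σ ^ 2)⁻¹ * y ^ 2)) μ,
            aux_int_sq_exp hb]
  rw [key]
  -- algebra
  have h1 : ((2 * σ ^ 2)⁻¹ : ℝ) ^ (-(3:ℝ)/2) = (2 * σ ^ 2) ^ ((3:ℝ)/2) := by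
    rw [Real.inv_rpow (by positivity), show (-(3:ℝ)/2) = -((3:ℝ)/2) by norm_num,
      Real.rpow_neg (by positivity), inv_inv]
  have h2 : ((2 * σ ^ 2) : ℝ) ^ ((3:ℝ)/2) = (2 * σ ^ 2) * Real.sqrt (2 * σ ^ 2) := by
    rw [show (3:ℝ)/2 = 1 + 1/2 by norm_num, Real.rpow_add (by positivity), Real.rpow_one,
      ← Real.sqrt_eq_rpow]
  have h3 : Real.sqrt (2 * π * σ ^ 2) = Real.sqrt (2 * σ ^ 2) * Real.sqrt π := by
    rw [← Real.sqrt_mul (by positivity)]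
    ring_nf
  have hs : 0 < Real.sqrt (2 * σ ^ 2) := Real.sqrt_pos.mpr (by positivity)
  have hq : 0 < Real.sqrt π := Real.sqrt_pos.mpr pi_pos
  rw [h1, h2, h3]
  field_simp

/-- Zero bias at time zero: with independent Gaussian `p`, `p_S` of common mean `μ`,
`p̄ = β·p_S + (1−β)·p`, `Δ = (1−β)²σ_p² + β²σ_S²`, and
`p̂ = μ + ((1−β)σ_p²/Δ)·(p̄ − μ)`, the election bias `𝔼[(p̂ − p̄)²]` vanishes
if and only if `(1−β)σ_p² = β·σ_S²`. -/
theorem zero_bias_at_time_zero_iff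
    {Ω : Type*} [MeasurableSpace Ω] {P : Measure Ω} [IsProbabilityMeasure P]
    (p pS : Ω → ℝ) (hp : Measurable p) (hpS : Measurable pS)
    (hindep : IndepFun p pS P)
    (μ σp σS : ℝ) (hσp : 0 < σp) (hσS : 0 < σS)
    (hpd : P.map p = gaussianReal μ ⟨σp ^ 2, sq_nonneg σp⟩)
    (hpSd : P.map pS = gaussianReal μ ⟨σS ^ 2, sq_nonneg σS⟩)
    (β : ℝ) (hβ : β ∈ Set.Ioc (0 : ℝ) 1) :
    (∫ ω, ((μ + ((1 - β) * σp ^ 2 / ((1 - β) ^ 2 * σp ^ 2 + β ^ 2 * σS ^ 2)) *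
        ((β * pS ω + (1 - β) * p ω) - μ))
        - (β * pS ω + (1 - β) * p ω)) ^ 2 ∂P = 0)
      ↔ (1 - β) * σp ^ 2 = β * σS ^ 2 := by
  obtain ⟨hβ0, hβ1⟩ := hβ
  set Δ : ℝ := (1 - β) ^ 2 * σp ^ 2 + β ^ 2 * σS ^ 2 with hΔdef
  have hΔ : 0 < Δ := by
    have h1 : 0 < β ^ 2 * σS ^ 2 := by positivity
    have h2 : 0 ≤ (1 - β) ^ 2 * σp ^ 2 := by positivity
    linarith
  set c : ℝ := (1 - β) * σp ^ 2 / Δ with hcdef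
  set k : ℝ := c - 1 with hkdef
  -- X and Y are the centered variables
  set X : Ω → ℝ := fun ω => p ω - μ with hXdef
  set Y : Ω → ℝ := fun ω => pS ω - μ with hYdef
  have hgm : StronglyMeasurable fun x : ℝ => (x - μ) ^ 2 :=
    ((measurable_id.sub_const μ).pow_const 2).stronglyMeasurable
  have hgm1 : StronglyMeasurable fun x : ℝ => x - μ :=
    (measurable_id.sub_const μ).stronglyMeasurable
  -- integrability and moments of X
  have hX2 : Integrable (fun ω => X ω ^ 2) P := by
    have h := aux_integrable_sq μ σp hσp
    rw [← hpd] at h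
    exact (integrable_map_measure hgm.aestronglyMeasurable hp.aemeasurable).mp h
  have hX1 : Integrable X P := by
    have h := aux_integrable_id μ σp hσp
    rw [← hpd] at h
    exact (integrable_map_measure hgm1.aestronglyMeasurable hp.aemeasurable).mp h
  have hX2v : ∫ ω, X ω ^ 2 ∂P = σp ^ 2 := by
    have h := integral_map (μ := P) hp.aemeasurable hgm.aestronglyMeasurable
    rw [hpd, aux_moment2 μ σp hσp] at h
    exact h.symm
  have hX1v : ∫ ω, X ω ∂P = 0 := by
    have h := integral_map (μ := P) hp.aemeasurable hgm1.aestronglyMeasurable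
    rw [hpd, aux_moment1 μ σp hσp] at h
    exact h.symm
  -- integrability and moments of Y
  have hY2 : Integrable (fun ω => Y ω ^ 2) P := by
    have h := aux_integrable_sq μ σS hσS
    rw [← hpSd] at h
    exact (integrable_map_measure hgm.aestronglyMeasurable hpS.aemeasurable).mp h
  have hY1 : Integrable Y P := by
    have h := aux_integrable_id μ σS hσS
    rw [← hpSd] at h
    exact (integrable_map_measure hgm1.aestronglyMeasurable hpS.aemeasurable).mp h
  have hY2v : ∫ ω, Y ω ^ 2 ∂P = σS ^ 2 := by
    have h := integral_map (μ := P) hpS.aemeasurable hgm.aestronglyMeasurable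
    rw [hpSd, aux_moment2 μ σS hσS] at h
    exact h.symm
  have hY1v : ∫ ω, Y ω ∂P = 0 := by
    have h := integral_map (μ := P) hpS.aemeasurable hgm1.aestronglyMeasurable
    rw [hpSd, aux_moment1 μ σS hσS] at h
    exact h.symm
  -- independence of centered variables
  have hXY : IndepFun X Y P :=
    hindep.comp (measurable_id.sub_const μ) (measurable_id.sub_const μ)
  have hXYint : Integrable (fun ω => X ω * Y ω) P := hXY.integrable_mul hX1 hY1
  have hXYv : ∫ ω, X ω * Y ω ∂P = 0 := by
    have h := hXY.integral_mul_eq_mul_integral hX1.aestronglyMeasurable hY1.aestronglyMeasurable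
    rw [hX1v, hY1v, mul_zero] at h
    exact h
  -- rewrite the integrand
  have hfeq : ∀ ω, ((μ + ((1 - β) * σp ^ 2 / ((1 - β) ^ 2 * σp ^ 2 + β ^ 2 * σS ^ 2)) *
        ((β * pS ω + (1 - β) * p ω) - μ))
        - (β * pS ω + (1 - β) * p ω)) ^ 2
      = (k ^ 2 * β ^ 2) * Y ω ^ 2
        + ((k ^ 2 * (2 * β * (1 - β))) * (X ω * Y ω) + (k ^ 2 * (1 - β) ^ 2) * X ω ^ 2) := by
    intro ω
    rw [← hΔdef]
    rw [hkdef, hcdef, hXdef, hYdef]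
    ring
  have hint : (∫ ω, ((μ + ((1 - β) * σp ^ 2 / ((1 - β) ^ 2 * σp ^ 2 + β ^ 2 * σS ^ 2)) *
        ((β * pS ω + (1 - β) * p ω) - μ))
        - (β * pS ω + (1 - β) * p ω)) ^ 2 ∂P) = k ^ 2 * Δ := by
    rw [integral_congr_ae (Filter.Eventually.of_forall hfeq)]
    have hI2 : Integrable (fun ω => (k ^ 2 * (2 * β * (1 - β))) * (X ω * Y ω)
        + (k ^ 2 * (1 - β) ^ 2) * X ω ^ 2) P := (hXYint.const_mul _).add (hX2.const_mul _)
    have hI1 : Integrable (fun ω => (k ^ 2 * β ^ 2) * Y ω ^ 2) P := hY2.const_mul _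
    rw [integral_add hI1 hI2, integral_add (hXYint.const_mul _) (hX2.const_mul _),
      integral_const_mul, integral_const_mul, integral_const_mul,
      hY2v, hXYv, hX2v]
    rw [hΔdef]
    ring
  rw [hint]
  constructor
  · intro h
    have hk : k = 0 := by
      have hsq : k ^ 2 = 0 := by
        rcases mul_eq_zero.mp h with h' | h'
        · exact h'
        · exact absurd h' hΔ.ne'
      exact pow_eq_zero_iff two_ne_zero |>.mp hsq
    have hc1 : (1 - β) * σp ^ 2 = Δ := by
      have : c = 1 := by rw [hkdef] at hk; linarith
      rw [hcdef] at this
      field_simp at this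
      linarith
    have h2 : β * ((1 - β) * σp ^ 2) = β * (β * σS ^ 2) := by
      rw [hΔdef] at hc1
      nlinarith [hc1]
    exact mul_left_cancel₀ hβ0.ne' h2
  · intro h
    have hΔe : Δ = (1 - β) * σp ^ 2 := by rw [hΔdef]; nlinarith [h]
    have hk : k = 0 := by
      rw [hkdef, hcdef, hΔe]
      have : (1 - β) * σp ^ 2 ≠ 0 := by rw [← hΔe]; exact hΔ.ne'
      field_simp
      rw [div_self (left_ne_zero_of_mul this), sub_self]
    rw [hk]
    ring
end

section
/- Fix β ∈ (0,1), ξ ∈ (1/2, 1], and set α₁(η) = 1 − βη − 2(1−η)(1−ξ) for η ∈ [0,1]. Then α₁(η)² + β²η² > 0 for all η ∈ [0,1], and the function g(η) = β²η² / (α₁(η)² + β²η²) is strictly monotonically increasing on [0,1]. Consequently, for any σ > 0 the positive welfare W_P(η) = −σ²·g(η) is strictly decreasing in the share of stereotypes η. -/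
/-- Algebraic core of Proposition 1(i): with `α₁(η) = 1 − βη − 2(1−η)(1−ξ)`,
the denominator `α₁(η)² + β²η²` is positive on `[0,1]`, the ratio
`g(η) = β²η²/(α₁(η)² + β²η²)` is strictly increasing on `[0,1]`, and hence the
positive welfare `W_P(η) = −σ²·g(η)` is strictly decreasing in the share of
stereotypes `η`. -/
theorem positive_welfare_decreasing_in_stereotype_share
    (β ξ : ℝ) (hβ : β ∈ Set.Ioo (0 : ℝ) 1) (hξ : ξ ∈ Set.Ioc (1/2 : ℝ) 1) :
    (∀ η ∈ Set.Icc (0 : ℝ) 1,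
        0 < (1 - β * η - 2 * (1 - η) * (1 - ξ)) ^ 2 + β ^ 2 * η ^ 2)
    ∧ StrictMonoOn
        (fun η : ℝ => β ^ 2 * η ^ 2 /
          ((1 - β * η - 2 * (1 - η) * (1 - ξ)) ^ 2 + β ^ 2 * η ^ 2))
        (Set.Icc 0 1)
    ∧ ∀ σ : ℝ, 0 < σ →
        StrictAntiOn
          (fun η : ℝ => -σ ^ 2 * (β ^ 2 * η ^ 2 /
            ((1 - β * η - 2 * (1 - η) * (1 - ξ)) ^ 2 + β ^ 2 * η ^ 2)))
          (Set.Icc 0 1) := by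
  obtain ⟨hβ0, hβ1⟩ := hβ
  obtain ⟨hξ0, hξ1⟩ := hξ
  -- α₁ positivity on [0,1]
  have halpha : ∀ η ∈ Set.Icc (0 : ℝ) 1,
      0 < 1 - β * η - 2 * (1 - η) * (1 - ξ) := by
    intro η hη
    obtain ⟨h0, h1⟩ := hη
    nlinarith [mul_nonneg h0 (sub_pos.mpr hβ1).le, mul_nonneg (sub_nonneg.mpr h1) h0]
  have hden : ∀ η ∈ Set.Icc (0 : ℝ) 1,
      0 < (1 - β * η - 2 * (1 - η) * (1 - ξ)) ^ 2 + β ^ 2 * η ^ 2 := by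
    intro η hη
    have := halpha η hη
    positivity
  have hmono : StrictMonoOn
      (fun η : ℝ => β ^ 2 * η ^ 2 /
        ((1 - β * η - 2 * (1 - η) * (1 - ξ)) ^ 2 + β ^ 2 * η ^ 2))
      (Set.Icc 0 1) := by
    intro a ha b hb hab
    have hda := hden a ha
    have hdb := hden b hb
    have hA := halpha a ha
    have hB := halpha b hb
    simp only
    rw [div_lt_div_iff₀ hda hdb]
    -- cross inequality: a·α₁(b) < b·α₁(a)
    have hcross : a * (1 - β * b - 2 * (1 - b) * (1 - ξ))
        < b * (1 - β * a - 2 * (1 - a) * (1 - ξ)) := by nlinarith [ha.1]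
    have haB : 0 ≤ a * (1 - β * b - 2 * (1 - b) * (1 - ξ)) :=
      mul_nonneg ha.1 hB.le
    have hsq := mul_self_lt_mul_self haB hcross
    nlinarith [mul_lt_mul_of_pos_left hsq (mul_pos hβ0 hβ0)]
  refine ⟨hden, hmono, ?_⟩
  intro σ hσ a ha b hb hab
  have h := hmono ha hb hab
  have hσ2 : 0 < σ ^ 2 := by positivity
  simp only
  nlinarith [mul_lt_mul_of_pos_left h hσ2]
end

section
/- Fix β ∈ (0,1), ξ ∈ (1/2, 1], σ > 0, and set α₁(η) = 1 − βη − 2(1−η)(1−ξ) and W_P(η) = −σ²·β²η²/(α₁(η)² + β²η²). If the share of stereotypes evolves as η(t) = exp(−λt), then: (i) for every fixed λ > 0, the map t ↦ W_P(exp(−λt)) is strictly increasing on [0, ∞); and (ii) for every fixed t > 0, the map λ ↦ W_P(exp(−λt)) is strictly increasing on (0, ∞). -/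
private lemma wp_key (β ξ σ : ℝ) (hβ0 : 0 < β) (hβ1 : β < 1)
    (hξ1 : 1/2 < ξ) (hξ2 : ξ ≤ 1) (hσ : 0 < σ)
    (η₁ η₂ : ℝ) (h1 : 0 < η₁) (h2 : η₂ ≤ 1) (hlt : η₁ < η₂) :
    -σ ^ 2 * (β ^ 2 * η₂ ^ 2) /
      ((1 - β * η₂ - 2 * (1 - η₂) * (1 - ξ)) ^ 2 + β ^ 2 * η₂ ^ 2) <
    -σ ^ 2 * (β ^ 2 * η₁ ^ 2) /
      ((1 - β * η₁ - 2 * (1 - η₁) * (1 - ξ)) ^ 2 + β ^ 2 * η₁ ^ 2) := by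
  have h1' : η₁ ≤ 1 := le_of_lt (lt_of_lt_of_le hlt h2)
  have h2' : 0 < η₂ := lt_trans h1 hlt
  set a₁ := 1 - β * η₁ - 2 * (1 - η₁) * (1 - ξ) with ha₁
  set a₂ := 1 - β * η₂ - 2 * (1 - η₂) * (1 - ξ) with ha₂
  have hA1 : 0 < a₁ := by nlinarith [mul_pos (sub_pos.mpr hβ1) h1]
  have hA2 : 0 < a₂ := by nlinarith [mul_pos (sub_pos.mpr hβ1) h2']
  have hD1 : 0 < a₁ ^ 2 + β ^ 2 * η₁ ^ 2 := by positivity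
  have hD2 : 0 < a₂ ^ 2 + β ^ 2 * η₂ ^ 2 := by positivity
  rw [neg_mul, neg_mul, neg_div, neg_div, neg_lt_neg_iff,
    div_lt_div_iff₀ hD1 hD2]
  have hcross : η₁ * a₂ < η₂ * a₁ := by nlinarith
  have hpos : 0 < η₁ * a₂ + η₂ * a₁ := by positivity
  nlinarith [mul_pos hσ hσ, mul_pos hβ0 hβ0,
    mul_pos (mul_pos hσ hσ) (mul_pos hβ0 hβ0),
    mul_pos hpos (sub_pos.mpr hcross)]

/-- Proposition 1(i): with the share of stereotypes evolving as `η(t) = exp(−λt)`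
and positive welfare `W_P(η) = −σ²·β²η²/(α₁(η)² + β²η²)` where
`α₁(η) = 1 − βη − 2(1−η)(1−ξ)`, the map `t ↦ W_P(exp(−λt))` is strictly
increasing on `[0,∞)` for every fixed `λ > 0`, and the map `λ ↦ W_P(exp(−λt))`
is strictly increasing on `(0,∞)` for every fixed `t > 0`. -/
theorem positive_welfare_increasing_in_time_and_intensity
    (β ξ σ : ℝ) (hβ : β ∈ Set.Ioo (0 : ℝ) 1) (hξ : ξ ∈ Set.Ioc (1/2 : ℝ) 1)
    (hσ : 0 < σ)
    (WP : ℝ → ℝ)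
    (hWP : ∀ η : ℝ, WP η = -σ ^ 2 * (β ^ 2 * η ^ 2) /
      ((1 - β * η - 2 * (1 - η) * (1 - ξ)) ^ 2 + β ^ 2 * η ^ 2)) :
    (∀ l : ℝ, 0 < l →
        StrictMonoOn (fun t : ℝ => WP (Real.exp (-l * t))) (Set.Ici 0))
    ∧ (∀ t : ℝ, 0 < t →
        StrictMonoOn (fun l : ℝ => WP (Real.exp (-l * t))) (Set.Ioi 0)) := by
  obtain ⟨hβ0, hβ1⟩ := hβ
  obtain ⟨hξ1, hξ2⟩ := hξ
  constructor
  · intro l hl t₁ ht₁ t₂ ht₂ hlt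
    simp only [hWP]
    apply wp_key β ξ σ hβ0 hβ1 hξ1 hξ2 hσ
    · exact Real.exp_pos _
    · exact Real.exp_le_one_iff.mpr (by simp at ht₁ ⊢; nlinarith)
    · apply Real.exp_lt_exp.mpr; nlinarith
  · intro t ht l₁ hl₁ l₂ hl₂ hlt
    simp only [hWP]
    apply wp_key β ξ σ hβ0 hβ1 hξ1 hξ2 hσ
    · exact Real.exp_pos _
    · exact Real.exp_le_one_iff.mpr (by simp at hl₁ ⊢; nlinarith)
    · apply Real.exp_lt_exp.mpr; nlinarith
end

section
/- Fix ξ ∈ [1/2, 1), σ > 0, μ ∈ ℝ, and β with 0 < β < 1 − ξ. Then the institutional welfare W_I(η) = −[(1−η)²(1−ξ)²(1−2μ)² + ((βη + 2(1−η)(1−ξ))² + β²η²)·σ²] is strictly monotonically increasing in the share of stereotypes η on [0,1]; equivalently, for every λ > 0 the map t ↦ W_I(exp(−λt)) is strictly monotone on [0,∞). -/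
lemma welfare_mono_aux (ξ σ μ β : ℝ) (hξ : ξ ∈ Set.Ico (1/2 : ℝ) 1) (hσ : 0 < σ)
    (hβ0 : 0 < β) (hβ : β < 1 - ξ) :
    StrictMonoOn
      (fun η : ℝ => -((1 - η) ^ 2 * (1 - ξ) ^ 2 * (1 - 2 * μ) ^ 2 +
        ((β * η + 2 * (1 - η) * (1 - ξ)) ^ 2 + β ^ 2 * η ^ 2) * σ ^ 2))
      (Set.Icc 0 1) := by
  obtain ⟨hξ1, hξ2⟩ := hξ
  intro a ⟨ha0, ha1⟩ b ⟨hb0, hb1⟩ hab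
  simp only [neg_lt_neg_iff]
  have h2 : 0 < 2 - a - b := by linarith
  have hba : 0 < b - a := by linarith
  have hc : 0 < 1 - ξ := by linarith
  have prodA : 0 ≤ (b-a)*(2-a-b)*((1-ξ)^2*(1-2*μ)^2) := by positivity
  have prod1 : 0 < σ^2*((b-a)*((2-a-b)*(2*(1-ξ)*(2*(1-ξ)-β)))) := by
    apply mul_pos (by positivity)
    apply mul_pos hba
    apply mul_pos h2
    apply mul_pos (by linarith)
    linarith
  have prod2 : 0 ≤ σ^2*((b-a)*((a+b)*(2*β*((1-ξ)-β)))) := by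
    apply mul_nonneg (by positivity)
    apply mul_nonneg hba.le
    apply mul_nonneg (by linarith)
    apply mul_nonneg (by linarith)
    linarith
  nlinarith [prodA, prod1, prod2]

/-- First monotone case of Proposition 1(ii): when `0 < β < 1 − ξ`, institutional
welfare `W_I(η) = −[(1−η)²(1−ξ)²(1−2μ)² + ((βη + 2(1−η)(1−ξ))² + β²η²)σ²]` is
strictly increasing in the share of stereotypes `η` on `[0,1]`; equivalently,
for every `λ > 0` the map `t ↦ W_I(exp(−λt))` is strictly monotone (decreasing)
on `[0,∞)`. -/
theorem institutional_welfare_monotone_small_beta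
    (ξ σ μ β : ℝ) (hξ : ξ ∈ Set.Ico (1/2 : ℝ) 1) (hσ : 0 < σ)
    (hβ0 : 0 < β) (hβ : β < 1 - ξ) :
    StrictMonoOn
      (fun η : ℝ => -((1 - η) ^ 2 * (1 - ξ) ^ 2 * (1 - 2 * μ) ^ 2 +
        ((β * η + 2 * (1 - η) * (1 - ξ)) ^ 2 + β ^ 2 * η ^ 2) * σ ^ 2))
      (Set.Icc 0 1)
    ∧ ∀ l : ℝ, 0 < l →
        StrictAntiOn
          (fun t : ℝ => -((1 - Real.exp (-l * t)) ^ 2 * (1 - ξ) ^ 2 * (1 - 2 * μ) ^ 2 +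
            ((β * Real.exp (-l * t) + 2 * (1 - Real.exp (-l * t)) * (1 - ξ)) ^ 2
              + β ^ 2 * Real.exp (-l * t) ^ 2) * σ ^ 2))
          (Set.Ici 0) := by
  have hmain := welfare_mono_aux ξ σ μ β hξ hσ hβ0 hβ
  refine ⟨hmain, fun l hl s hs t ht hst => ?_⟩
  have h1 : Real.exp (-l * t) < Real.exp (-l * s) := by
    apply Real.exp_lt_exp.mpr
    nlinarith
  have hmem : ∀ u : ℝ, 0 ≤ u → Real.exp (-l * u) ∈ Set.Icc (0:ℝ) 1 := by
    intro u hu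
    refine ⟨(Real.exp_pos _).le, ?_⟩
    rw [show (1:ℝ) = Real.exp 0 by simp]
    apply Real.exp_le_exp.mpr
    nlinarith
  exact hmain (hmem t ht) (hmem s hs) h1
end

section
/- Fix ξ ∈ [1/2, 1], σ > 0, μ ∈ ℝ, and β > 0 with 2βσ² > (1−ξ)·((1−2μ)² + 4σ²). Then the institutional welfare W_I(η) = −[(1−η)²(1−ξ)²(1−2μ)² + ((βη + 2(1−η)(1−ξ))² + β²η²)·σ²] is strictly monotonically decreasing in the share of stereotypes η on [0,1]. -/
/-- Second monotone case of Proposition 1(ii): when `β > 0` and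
`2βσ² > (1−ξ)((1−2μ)² + 4σ²)`, institutional welfare
`W_I(η) = −[(1−η)²(1−ξ)²(1−2μ)² + ((βη + 2(1−η)(1−ξ))² + β²η²)σ²]` is strictly
decreasing in the share of stereotypes `η` on `[0,1]`. -/
theorem institutional_welfare_decreasing_large_beta
    (ξ σ μ β : ℝ) (hξ : ξ ∈ Set.Icc (1/2 : ℝ) 1) (hσ : 0 < σ) (hβ0 : 0 < β)
    (hβ : (1 - ξ) * ((1 - 2 * μ) ^ 2 + 4 * σ ^ 2) < 2 * β * σ ^ 2) :
    StrictAntiOn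
      (fun η : ℝ => -((1 - η) ^ 2 * (1 - ξ) ^ 2 * (1 - 2 * μ) ^ 2 +
        ((β * η + 2 * (1 - η) * (1 - ξ)) ^ 2 + β ^ 2 * η ^ 2) * σ ^ 2))
      (Set.Icc 0 1) := by
  obtain ⟨hξ1, hξ2⟩ := hξ
  have hd : (0:ℝ) ≤ 1 - ξ := by linarith
  have h2d : 2 * (1 - ξ) < β := by
    nlinarith [mul_nonneg hd (sq_nonneg (1 - 2 * μ)), mul_pos hσ hσ]
  intro a ha b hb hab
  obtain ⟨ha0, ha1⟩ := ha
  obtain ⟨hb0, hb1⟩ := hb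
  simp only [neg_lt_neg_iff]
  have hD : (0:ℝ) < b - a := by linarith
  have hA : 0 ≤ (b - a) * (1 - a) * (1 - ξ) *
      (2 * β * σ ^ 2 - (1 - ξ) * ((1 - 2 * μ) ^ 2 + 4 * σ ^ 2)) := by
    apply mul_nonneg (mul_nonneg (mul_nonneg hD.le (by linarith)) hd)
    linarith
  have hB : 0 ≤ (b - a) * a * σ ^ 2 * (β * (β - 2 * (1 - ξ))) := by
    apply mul_nonneg (mul_nonneg (mul_nonneg hD.le ha0) (sq_nonneg σ))
    exact mul_nonneg hβ0.le (by linarith)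
  have hC : 0 ≤ (b - a) * a * σ ^ 2 * β ^ 2 := by
    exact mul_nonneg (mul_nonneg (mul_nonneg hD.le ha0) (sq_nonneg σ)) (sq_nonneg β)
  have hDpos : 0 < (b - a) ^ 2 * β ^ 2 * σ ^ 2 := by positivity
  have hE : 0 ≤ (b - a) ^ 2 * ((1 - ξ) ^ 2 * (1 - 2 * μ) ^ 2) := by positivity
  have hF : 0 ≤ (b - a) ^ 2 * ((β - 2 * (1 - ξ)) ^ 2 * σ ^ 2) := by positivity
  have key : ((1 - b) ^ 2 * (1 - ξ) ^ 2 * (1 - 2 * μ) ^ 2 +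
        ((β * b + 2 * (1 - b) * (1 - ξ)) ^ 2 + β ^ 2 * b ^ 2) * σ ^ 2) -
      ((1 - a) ^ 2 * (1 - ξ) ^ 2 * (1 - 2 * μ) ^ 2 +
        ((β * a + 2 * (1 - a) * (1 - ξ)) ^ 2 + β ^ 2 * a ^ 2) * σ ^ 2) =
      2 * ((b - a) * (1 - a) * (1 - ξ) *
        (2 * β * σ ^ 2 - (1 - ξ) * ((1 - 2 * μ) ^ 2 + 4 * σ ^ 2))) +
      2 * ((b - a) * a * σ ^ 2 * (β * (β - 2 * (1 - ξ)))) +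
      2 * ((b - a) * a * σ ^ 2 * β ^ 2) +
      (b - a) ^ 2 * β ^ 2 * σ ^ 2 +
      (b - a) ^ 2 * ((1 - ξ) ^ 2 * (1 - 2 * μ) ^ 2) +
      (b - a) ^ 2 * ((β - 2 * (1 - ξ)) ^ 2 * σ ^ 2) := by ring
  linarith
end

section
/- Fix ξ ∈ [1/2, 1), σ > 0, μ ∈ ℝ, and β with β > 1 − ξ and 2βσ² < (1−ξ)·((1−2μ)² + 4σ²). Set K = (1−2μ)² + 4σ², N = 2(1−ξ)((1−ξ)K − 2βσ²), D = 4β²σ² − 8β(1−ξ)σ² + 2(1−ξ)²K, and η* = N/D. Then η* ∈ (0,1), and the institutional welfare W_I(η) = −[(1−η)²(1−ξ)²(1−2μ)² + ((βη + 2(1−η)(1−ξ))² + β²η²)·σ²] is strictly increasing on [0, η*] and strictly decreasing on [η*, 1]. Consequently, for every λ > 0, the map t ↦ W_I(exp(−λt)) attains an interior maximum at the finite time t* = −(1/λ)·log(η*). -/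
/-- Interior (non-monotone) case of Proposition 1(ii): when `β > 1 − ξ` and
`2βσ² < (1−ξ)((1−2μ)² + 4σ²)`, setting `K = (1−2μ)² + 4σ²`,
`N = 2(1−ξ)((1−ξ)K − 2βσ²)`, `D = 4β²σ² − 8β(1−ξ)σ² + 2(1−ξ)²K`, `η* = N/D`,
the institutional welfare `W_I` is strictly increasing on `[0, η*]` and strictly
decreasing on `[η*, 1]`, with `η* ∈ (0,1)`; hence for every `λ > 0` the map
`t ↦ W_I(exp(−λt))` attains an interior maximum at the finite time
`t* = −(1/λ)·log η* > 0`. -/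
theorem institutional_welfare_interior_maximum
    (ξ σ μ β : ℝ) (hξ : ξ ∈ Set.Ico (1/2 : ℝ) 1) (hσ : 0 < σ)
    (hβ1 : 1 - ξ < β)
    (hβ2 : 2 * β * σ ^ 2 < (1 - ξ) * ((1 - 2 * μ) ^ 2 + 4 * σ ^ 2))
    (K N D ηstar : ℝ)
    (hK : K = (1 - 2 * μ) ^ 2 + 4 * σ ^ 2)
    (hN : N = 2 * (1 - ξ) * ((1 - ξ) * K - 2 * β * σ ^ 2))
    (hD : D = 4 * β ^ 2 * σ ^ 2 - 8 * β * (1 - ξ) * σ ^ 2 + 2 * (1 - ξ) ^ 2 * K)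
    (hηstar : ηstar = N / D)
    (WI : ℝ → ℝ)
    (hWI : ∀ η : ℝ, WI η = -((1 - η) ^ 2 * (1 - ξ) ^ 2 * (1 - 2 * μ) ^ 2 +
      ((β * η + 2 * (1 - η) * (1 - ξ)) ^ 2 + β ^ 2 * η ^ 2) * σ ^ 2)) :
    ηstar ∈ Set.Ioo (0 : ℝ) 1
    ∧ StrictMonoOn WI (Set.Icc 0 ηstar)
    ∧ StrictAntiOn WI (Set.Icc ηstar 1)
    ∧ ∀ l : ℝ, 0 < l →
        0 < -(1 / l) * Real.log ηstar
        ∧ ∀ t : ℝ, 0 ≤ t →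
            WI (Real.exp (-l * t))
              ≤ WI (Real.exp (-l * (-(1 / l) * Real.log ηstar))) := by
  obtain ⟨hξ0, hξ1⟩ := hξ
  have hξpos : 0 < 1 - ξ := by linarith
  have hβpos : 0 < β := by linarith
  have hσ2 : 0 < σ ^ 2 := by positivity
  have hDpos : 0 < D := by
    nlinarith [mul_nonneg (sq_nonneg (β - 2 * (1 - ξ))) hσ2.le,
      mul_nonneg (sq_nonneg (1 - 2 * μ)) (sq_nonneg (1 - ξ)),
      mul_pos (mul_pos hβpos hβpos) hσ2]
  have hNpos : 0 < N := by
    have h0 : 0 < (1 - ξ) * K - 2 * β * σ ^ 2 := by rw [hK]; nlinarith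
    rw [hN]
    exact mul_pos (by linarith) h0
  have hDN : N < D := by
    have h : D - N = 4 * β * σ ^ 2 * (β - (1 - ξ)) := by rw [hD, hN]; ring
    nlinarith [mul_pos (mul_pos hβpos hσ2) (sub_pos.mpr hβ1)]
  have hND : D * ηstar = N := by
    rw [hηstar]; field_simp
  have hmem : ηstar ∈ Set.Ioo (0 : ℝ) 1 := by
    constructor
    · rw [hηstar]; positivity
    · rw [hηstar, div_lt_one hDpos]; exact hDN
  have key : ∀ x y : ℝ, WI y - WI x = (y - x) * (N - D / 2 * (x + y)) := by
    intro x y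
    rw [hWI, hWI, hN, hD, hK]; ring
  have mono : StrictMonoOn WI (Set.Icc 0 ηstar) := by
    intro x hx y hy hxy
    have h1 : D * (x + y) < D * (2 * ηstar) :=
      mul_lt_mul_of_pos_left (by linarith [hx.2, hy.2]) hDpos
    have h2 : 0 < N - D / 2 * (x + y) := by nlinarith [hND]
    have hk := key x y
    nlinarith [mul_pos (sub_pos.mpr hxy) h2]
  have anti : StrictAntiOn WI (Set.Icc ηstar 1) := by
    intro x hx y hy hxy
    have h1 : D * (2 * ηstar) < D * (x + y) :=
      mul_lt_mul_of_pos_left (by linarith [hx.1, hy.1]) hDpos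
    have h2 : N - D / 2 * (x + y) < 0 := by nlinarith [hND]
    have hk := key x y
    nlinarith [mul_neg_of_pos_of_neg (sub_pos.mpr hxy) h2]
  refine ⟨hmem, mono, anti, ?_⟩
  intro l hl
  have hlog : Real.log ηstar < 0 := Real.log_neg hmem.1 hmem.2
  constructor
  · have h := mul_pos (show (0:ℝ) < 1 / l by positivity) (neg_pos.mpr hlog)
    have he : -(1 / l) * Real.log ηstar = 1 / l * -Real.log ηstar := by ring
    rw [he]; exact h
  · intro t ht
    have hexp : Real.exp (-l * (-(1 / l) * Real.log ηstar)) = ηstar := by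
      rw [show -l * (-(1 / l) * Real.log ηstar) = Real.log ηstar by
        field_simp, Real.exp_log hmem.1]
    rw [hexp]
    have hk := key (Real.exp (-l * t)) ηstar
    have hk2 : WI ηstar - WI (Real.exp (-l * t))
        = D / 2 * (ηstar - Real.exp (-l * t)) ^ 2 := by
      linear_combination hk + (Real.exp (-l * t) - ηstar) * hND
    have hpos : 0 ≤ D / 2 * (ηstar - Real.exp (-l * t)) ^ 2 := by positivity
    linarith
end

section
/- Fix β ∈ (0,1], ξ ∈ (1/2, 1], σ_p, σ_S > 0 and λ > 0, and suppose (1−β)/β < σ_S²/σ_p². Define α₁(η) = 1 − βη − 2(1−η)(1−ξ) and α₂(η) = βη. Then there exists a finite time t* ∈ (0, ∞) such that, with η* = exp(−λt*), the zero-bias equation α₁(η*)·(1 − α₁(η*))·σ_p² = α₂(η*)²·σ_S² holds. -/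
private lemma zb_aux_pos (β ξ σp σS η₀ : ℝ) (hβ0 : 0 < β) (hβ1 : β ≤ 1) (hξ0 : 1/2 < ξ) (hξ1 : ξ ≤ 1)
    (hσp : 0 < σp) (hσS : 0 < σS) (h0 : 0 < η₀)
    (h1 : η₀ ≤ (2 * ξ - 1) / 2)
    (h2 : η₀ ≤ (2 * ξ - 1) * σp ^ 2 / (4 * β * σS ^ 2)) :
    0 < (1 - β * η₀ - 2 * (1 - η₀) * (1 - ξ)) *
        (1 - (1 - β * η₀ - 2 * (1 - η₀) * (1 - ξ))) * σp ^ 2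
      - (β * η₀) ^ 2 * σS ^ 2 := by
  have hc : (0:ℝ) < 2 * ξ - 1 := by linarith
  have hA : (2 * ξ - 1) / 2 ≤ 1 - β * η₀ - 2 * (1 - η₀) * (1 - ξ) := by nlinarith
  have hB : β * η₀ ≤ 1 - (1 - β * η₀ - 2 * (1 - η₀) * (1 - ξ)) := by nlinarith
  have hAB : ((2 * ξ - 1) / 2) * (β * η₀) ≤
      (1 - β * η₀ - 2 * (1 - η₀) * (1 - ξ)) * (1 - (1 - β * η₀ - 2 * (1 - η₀) * (1 - ξ))) := by
    have hp : 0 < β * η₀ := by positivity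
    nlinarith
  have hsmall : β * η₀ * σS ^ 2 ≤ (2 * ξ - 1) * σp ^ 2 / 4 := by
    have h4 : 0 < 4 * β * σS ^ 2 := by positivity
    rw [le_div_iff₀ h4] at h2
    linarith
  have hsq : (β * η₀) ^ 2 * σS ^ 2 ≤ β * η₀ * ((2 * ξ - 1) * σp ^ 2 / 4) := by
    have hp : 0 < β * η₀ := by positivity
    nlinarith
  have hABp := mul_le_mul_of_nonneg_right hAB (le_of_lt (pow_pos hσp 2))
  nlinarith [mul_pos (mul_pos hβ0 h0) (mul_pos hc (pow_pos hσp 2))]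

private lemma zb_aux_neg (β ξ σp σS : ℝ) (hβ0 : 0 < β)
    (hσp : 0 < σp) (hσS : 0 < σS)
    (h : (1 - β) / β < σS ^ 2 / σp ^ 2) :
    (1 - β * 1 - 2 * (1 - 1) * (1 - ξ)) *
        (1 - (1 - β * 1 - 2 * (1 - 1) * (1 - ξ))) * σp ^ 2
      - (β * 1) ^ 2 * σS ^ 2 < 0 := by
  have hmul : (1 - β) * σp ^ 2 < β * σS ^ 2 := by
    have := (div_lt_div_iff₀ hβ0 (pow_pos hσp 2)).mp h
    nlinarith
  nlinarith

/-- Proposition 2 (existence of a finite zero-bias time): if `(1−β)/β < σ_S²/σ_p²`,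
with election coefficients `α₁(η) = 1 − βη − 2(1−η)(1−ξ)` and `α₂(η) = βη` along
the critical-thinking path `η = exp(−λt)`, there exists a finite time
`t* ∈ (0,∞)` at which the zero-bias equation `α₁(1 − α₁)σ_p² = α₂²σ_S²` holds. -/
theorem exists_zero_bias_time
    (β ξ σp σS l : ℝ) (hβ : β ∈ Set.Ioc (0 : ℝ) 1) (hξ : ξ ∈ Set.Ioc (1/2 : ℝ) 1)
    (hσp : 0 < σp) (hσS : 0 < σS) (hl : 0 < l)
    (h : (1 - β) / β < σS ^ 2 / σp ^ 2) :
    ∃ t : ℝ, 0 < t ∧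
      (1 - β * Real.exp (-l * t) - 2 * (1 - Real.exp (-l * t)) * (1 - ξ)) *
        (1 - (1 - β * Real.exp (-l * t) - 2 * (1 - Real.exp (-l * t)) * (1 - ξ))) *
          σp ^ 2
        = (β * Real.exp (-l * t)) ^ 2 * σS ^ 2 := by
  obtain ⟨hβ0, hβ1⟩ := hβ
  obtain ⟨hξ0, hξ1⟩ := hξ
  set η₀ : ℝ := min ((2 * ξ - 1) / 2) ((2 * ξ - 1) * σp ^ 2 / (4 * β * σS ^ 2)) with hη₀def
  have hc : (0:ℝ) < 2 * ξ - 1 := by linarith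
  have hη₀pos : 0 < η₀ := lt_min (by linarith) (by positivity)
  have hη₀le : η₀ ≤ (2 * ξ - 1) / 2 := min_le_left _ _
  have hη₀le2 : η₀ ≤ (2 * ξ - 1) * σp ^ 2 / (4 * β * σS ^ 2) := min_le_right _ _
  clear_value η₀
  have hη₀lt1 : η₀ < 1 := by
    have : (2 * ξ - 1) / 2 ≤ 1 / 2 := by linarith
    linarith
  set f : ℝ → ℝ := fun η =>
    (1 - β * η - 2 * (1 - η) * (1 - ξ)) * (1 - (1 - β * η - 2 * (1 - η) * (1 - ξ))) * σp ^ 2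
      - (β * η) ^ 2 * σS ^ 2 with hf
  have hfη₀ : 0 < f η₀ :=
    zb_aux_pos β ξ σp σS η₀ hβ0 hβ1 hξ0 hξ1 hσp hσS hη₀pos hη₀le hη₀le2
  have hf1 : f 1 < 0 := zb_aux_neg β ξ σp σS hβ0 hσp hσS h
  have hcont : ContinuousOn f (Set.Icc η₀ 1) := by
    apply Continuous.continuousOn
    rw [hf]; fun_prop
  have hmem : (0:ℝ) ∈ Set.Icc (f 1) (f η₀) := ⟨le_of_lt hf1, le_of_lt hfη₀⟩
  obtain ⟨η, hηmem, hηeq⟩ := intermediate_value_Icc' (le_of_lt hη₀lt1) hcont hmem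
  have hηpos : 0 < η := lt_of_lt_of_le hη₀pos hηmem.1
  have hηlt1 : η < 1 := by
    rcases lt_or_eq_of_le hηmem.2 with h' | h'
    · exact h'
    · exfalso; rw [h'] at hηeq; linarith
  refine ⟨-Real.log η / l, ?_, ?_⟩
  · have hlog : Real.log η < 0 := Real.log_neg hηpos hηlt1
    exact div_pos (neg_pos.mpr hlog) hl
  · have hexp : Real.exp (-l * (-Real.log η / l)) = η := by
      have : -l * (-Real.log η / l) = Real.log η := by field_simp
      rw [this, Real.exp_log hηpos]
    rw [hexp]
    have h0 : f η = 0 := hηeq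
    rw [hf] at h0
    simp only at h0
    linarith
end

section
/- Fix β ∈ (0,1], σ_p, σ_S > 0 and λ > 0, and suppose (1−β)σ_p² < β·σ_S². Then t* := −(1/λ)·log( σ_p² / (β(σ_p² + σ_S²)) ) satisfies t* > 0, and η* = exp(−λt*) is the unique η ∈ (0,1] solving (1 − βη)/(βη) = σ_S²/σ_p², i.e. the unique solution of the zero-bias equation (1 − βη)·βη·σ_p² = (βη)²·σ_S². -/
/-- Explicit closed-form zero-bias time of Proposition 2 for `ξ = 1`: if
`(1−β)σ_p² < βσ_S²`, then `t* = −(1/λ)·log(σ_p²/(β(σ_p² + σ_S²)))` is positive,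
and `η* = exp(−λt*)` is the unique `η ∈ (0,1]` solving
`(1 − βη)/(βη) = σ_S²/σ_p²`, i.e. the unique solution of the zero-bias
equation `(1 − βη)·βη·σ_p² = (βη)²·σ_S²`. -/
theorem zero_bias_time_closed_form
    (β σp σS l : ℝ) (hβ : β ∈ Set.Ioc (0 : ℝ) 1)
    (hσp : 0 < σp) (hσS : 0 < σS) (hl : 0 < l)
    (h : (1 - β) * σp ^ 2 < β * σS ^ 2)
    (tstar ηstar : ℝ)
    (htstar : tstar = -(1 / l) * Real.log (σp ^ 2 / (β * (σp ^ 2 + σS ^ 2))))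
    (hηstar : ηstar = Real.exp (-l * tstar)) :
    0 < tstar
    ∧ ηstar ∈ Set.Ioc (0 : ℝ) 1
    ∧ (1 - β * ηstar) / (β * ηstar) = σS ^ 2 / σp ^ 2
    ∧ (1 - β * ηstar) * (β * ηstar) * σp ^ 2 = (β * ηstar) ^ 2 * σS ^ 2
    ∧ ∀ η ∈ Set.Ioc (0 : ℝ) 1,
        (1 - β * η) * (β * η) * σp ^ 2 = (β * η) ^ 2 * σS ^ 2 → η = ηstar := by
  obtain ⟨hβ0, hβ1⟩ := hβ
  have hp2 : 0 < σp ^ 2 := by positivity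
  have hS2 : 0 < σS ^ 2 := by positivity
  have hden : 0 < β * (σp ^ 2 + σS ^ 2) := by positivity
  set a : ℝ := σp ^ 2 / (β * (σp ^ 2 + σS ^ 2)) with ha
  have ha0 : 0 < a := by positivity
  have ha1 : a < 1 := by
    rw [ha, div_lt_one hden]; nlinarith
  have hloga : Real.log a < 0 := Real.log_neg ha0 ha1
  have ht : 0 < tstar := by
    rw [htstar]; have := hl; field_simp; nlinarith [mul_pos hl (neg_pos.mpr hloga)]
  have hexp : -l * tstar = Real.log a := by
    rw [htstar]; field_simp
  have hη : ηstar = a := by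
    rw [hηstar, hexp, Real.exp_log ha0]
  have hη0 : 0 < ηstar := by rw [hη]; exact ha0
  have hη1 : ηstar ≤ 1 := le_of_lt (hη ▸ ha1)
  have hβη : β * ηstar = σp ^ 2 / (σp ^ 2 + σS ^ 2) := by
    rw [hη, ha]; field_simp
  have hβηpos : 0 < β * ηstar := by positivity
  have key : (1 - β * ηstar) / (β * ηstar) = σS ^ 2 / σp ^ 2 := by
    rw [div_eq_div_iff (ne_of_gt hβηpos) (ne_of_gt hp2), hβη]
    field_simp; ring
  refine ⟨ht, ⟨hη0, hη1⟩, key, ?_, ?_⟩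
  · have := (div_eq_div_iff (ne_of_gt hβηpos) (ne_of_gt hp2)).mp key
    nlinarith
  · intro η ⟨hη0', hη1'⟩ heq
    have hβηpos' : 0 < β * η := by positivity
    have h1 : (1 - β * η) * σp ^ 2 * (β * η) = (β * η) * σS ^ 2 * (β * η) := by
      linear_combination heq
    have h1' := mul_right_cancel₀ (ne_of_gt hβηpos') h1
    have h2 : β * η = β * ηstar := by
      rw [hβη, eq_div_iff (by positivity)]
      linarith
    exact mul_left_cancel₀ (ne_of_gt hβ0) h2
end

section
/- Fix β > 0, ξ ∈ [1/2, 1], μ ∈ ℝ, σ_p, σ_S > 0 and λ > 0, and define the institutional welfare along the critical-thinking path as G(t) = −[(1 − e^{−λt})²(1−ξ)²(1−2μ)² + (βe^{−λt} + 2(1 − e^{−λt})(1−ξ))²·σ_p² + β²e^{−2λt}·σ_S²]. Then G is differentiable at t = 0 with G′(0) = 2βλ·((β − 2(1−ξ))σ_p² + β·σ_S²). In particular, when σ_p = σ_S = σ > 0, G′(0) = 4βλσ²(β + ξ − 1), which is strictly positive if and only if 1 − β < ξ. -/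
/-- Time-derivative of institutional welfare at `t = 0`: with
`G(t) = −[(1 − e^{−λt})²(1−ξ)²(1−2μ)² + (βe^{−λt} + 2(1 − e^{−λt})(1−ξ))²σ_p²
+ β²e^{−2λt}σ_S²]`, `G` is differentiable at `0` with
`G′(0) = 2βλ((β − 2(1−ξ))σ_p² + βσ_S²)`; when `σ_p = σ_S = σ > 0` this equals
`4βλσ²(β + ξ − 1)`, which is strictly positive iff `1 − β < ξ`. -/
theorem institutional_welfare_deriv_at_zero
    (β ξ μ σp σS l : ℝ) (hβ : 0 < β) (hξ : ξ ∈ Set.Icc (1/2 : ℝ) 1)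
    (hσp : 0 < σp) (hσS : 0 < σS) (hl : 0 < l) :
    HasDerivAt
      (fun t : ℝ => -((1 - Real.exp (-l * t)) ^ 2 * (1 - ξ) ^ 2 * (1 - 2 * μ) ^ 2
        + (β * Real.exp (-l * t) + 2 * (1 - Real.exp (-l * t)) * (1 - ξ)) ^ 2 * σp ^ 2
        + β ^ 2 * Real.exp (-2 * l * t) * σS ^ 2))
      (2 * β * l * ((β - 2 * (1 - ξ)) * σp ^ 2 + β * σS ^ 2)) 0
    ∧ ∀ σ : ℝ, 0 < σ → σp = σ → σS = σ →
        2 * β * l * ((β - 2 * (1 - ξ)) * σp ^ 2 + β * σS ^ 2)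
            = 4 * β * l * σ ^ 2 * (β + ξ - 1)
          ∧ (0 < 4 * β * l * σ ^ 2 * (β + ξ - 1) ↔ 1 - β < ξ) := by
  constructor
  · have h1 : HasDerivAt (fun t : ℝ => Real.exp (-l * t)) (-l) 0 := by
      have := ((hasDerivAt_id (0 : ℝ)).const_mul (-l)).exp
      simpa using this
    have h2 : HasDerivAt (fun t : ℝ => Real.exp (-2 * l * t)) (-2 * l) 0 := by
      have := ((hasDerivAt_id (0 : ℝ)).const_mul (-2 * l)).exp
      simpa using this
    have hA := (((h1.const_sub 1).pow 2).mul_const ((1 - ξ) ^ 2 * (1 - 2 * μ) ^ 2))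
    have hB := ((((h1.const_mul β).add (((h1.const_sub 1).const_mul 2).mul_const
      (1 - ξ))).pow 2).mul_const (σp ^ 2))
    have hC := ((h2.const_mul (β ^ 2)).mul_const (σS ^ 2))
    have := ((hA.add hB).add hC).neg
    convert this using 1
    · rfl
    · rfl
    · funext t; simp only [Pi.neg_apply, Pi.add_apply, Pi.pow_apply]; ring
    · norm_num
      ring
  · rintro σ hσ rfl rfl
    constructor
    · ring
    · constructor
      · intro h
        nlinarith [mul_pos (mul_pos hβ hl) (pow_pos hσ 2)]
      · intro h
        have : 0 < β + ξ - 1 := by linarith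
        positivity
end
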